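/- Let f : [0,∞) → [0,∞) be continuous with ∫₀^∞ f(t) dt < ∞, and suppose E : [0,∞) → [0,∞) is C¹ and satisfies E'(t) + c₁ E(t) ≤ c₂ √(E(t)/κ₀) for constants c₁, c₂, κ₀ > 0, together with κ₀‖v(t)‖² ≤ E(t) ≤ ‖v(t)‖² where ∫₀^∞ ‖v(t)‖² dt < ∞. Then lim_{t→∞} E(t) = 0 (hence ‖v(t)‖ → 0). -/

import Mathlib

open MeasureTheory

/-- Grönwall-type bound. -/
lemma stmt15_gron (c₁ : ℝ) (E E' h : ℝ → ℝ) (s t : ℝ) (hst : s ≤ t)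
    (hE' : ∀ τ ∈ Set.Icc s t, HasDerivAt E (E' τ) τ)
    (hE'c : ContinuousOn E' (Set.Icc s t))
    (hEc : ContinuousOn E (Set.Icc s t))
    (hhc : ContinuousOn h (Set.Icc s t))
    (hle : ∀ τ ∈ Set.Icc s t, E' τ + c₁ * E τ ≤ h τ) :
    E t ≤ Real.exp (c₁ * (s - t)) * E s +
      ∫ τ in s..t, Real.exp (c₁ * (τ - t)) * h τ := by
  have hes : Set.uIcc s t = Set.Icc s t := Set.uIcc_of_le hst
  have hg'c : ContinuousOn (fun τ => Real.exp (c₁ * τ) * (E' τ + c₁ * E τ)) (Set.Icc s t) := by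
    exact ((Real.continuous_exp.comp (continuous_const.mul continuous_id)).continuousOn).mul
      (hE'c.add (continuousOn_const.mul hEc))
  have hderiv : ∀ τ ∈ Set.uIcc s t, HasDerivAt (fun τ => Real.exp (c₁ * τ) * E τ)
      (Real.exp (c₁ * τ) * (E' τ + c₁ * E τ)) τ := by
    intro τ hτ
    rw [hes] at hτ
    have h1 : HasDerivAt (fun τ : ℝ => Real.exp (c₁ * τ)) (c₁ * Real.exp (c₁ * τ)) τ := by
      have := ((hasDerivAt_id τ).const_mul c₁).exp
      simp only [id_eq, mul_one] at this
      convert this using 1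
      ring
    have h2 := h1.mul (hE' τ hτ)
    refine h2.congr_deriv ?_
    ring
  have hint : IntervalIntegrable (fun τ => Real.exp (c₁ * τ) * (E' τ + c₁ * E τ)) volume s t := by
    apply ContinuousOn.intervalIntegrable
    rw [hes]; exact hg'c
  have key := intervalIntegral.integral_eq_sub_of_hasDerivAt hderiv hint
  have hint2 : IntervalIntegrable (fun τ => Real.exp (c₁ * τ) * h τ) volume s t := by
    apply ContinuousOn.intervalIntegrable
    rw [hes]
    exact ((Real.continuous_exp.comp (continuous_const.mul continuous_id)).continuousOn).mul hhc
  have mono : (∫ τ in s..t, Real.exp (c₁ * τ) * (E' τ + c₁ * E τ)) ≤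
      ∫ τ in s..t, Real.exp (c₁ * τ) * h τ := by
    apply intervalIntegral.integral_mono_on hst hint hint2
    intro τ hτ
    exact mul_le_mul_of_nonneg_left (hle τ hτ) (Real.exp_nonneg _)
  have h2 : Real.exp (c₁ * t) * E t ≤ Real.exp (c₁ * s) * E s +
      ∫ τ in s..t, Real.exp (c₁ * τ) * h τ := by linarith
  have h3 : E t = Real.exp (-(c₁ * t)) * (Real.exp (c₁ * t) * E t) := by
    rw [← mul_assoc, ← Real.exp_add]; simp
  rw [h3]
  calc Real.exp (-(c₁ * t)) * (Real.exp (c₁ * t) * E t)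
      ≤ Real.exp (-(c₁ * t)) * (Real.exp (c₁ * s) * E s +
        ∫ τ in s..t, Real.exp (c₁ * τ) * h τ) :=
        mul_le_mul_of_nonneg_left h2 (Real.exp_nonneg _)
    _ = Real.exp (c₁ * (s - t)) * E s + ∫ τ in s..t, Real.exp (c₁ * (τ - t)) * h τ := by
        rw [mul_add, ← intervalIntegral.integral_const_mul]
        congr 1
        · rw [← mul_assoc, ← Real.exp_add]
          congr 2
          ring
        · apply intervalIntegral.integral_congr
          intro τ _
          show Real.exp (-(c₁ * t)) * (Real.exp (c₁ * τ) * h τ) = Real.exp (c₁ * (τ - t)) * h τ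
          rw [← mul_assoc, ← Real.exp_add]
          congr 2
          ring

/-- exponential integral bound -/
lemma stmt15_expint (c : ℝ) (hc : 0 < c) (s t : ℝ) (hst : s ≤ t) :
    (∫ τ in s..t, Real.exp (2 * c * (τ - t))) ≤ 1 / (2 * c) := by
  have hc2 : (2 : ℝ) * c ≠ 0 := by positivity
  have hderiv : ∀ τ ∈ Set.uIcc s t, HasDerivAt (fun τ => Real.exp (2 * c * (τ - t)) / (2 * c))
      (Real.exp (2 * c * (τ - t))) τ := by
    intro τ _
    have h1 : HasDerivAt (fun τ : ℝ => 2 * c * (τ - t)) (2 * c) τ := by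
      simpa using ((hasDerivAt_id τ).sub_const t).const_mul (2 * c)
    have h2 := ((Real.hasDerivAt_exp _).comp τ h1).div_const (2 * c)
    exact h2.congr_deriv (by field_simp)
  have hint : IntervalIntegrable (fun τ => Real.exp (2 * c * (τ - t))) volume s t :=
    (Real.continuous_exp.comp (by continuity)).intervalIntegrable s t
  rw [intervalIntegral.integral_eq_sub_of_hasDerivAt hderiv hint]
  have h1 : 0 ≤ Real.exp (2 * c * (s - t)) := Real.exp_nonneg _
  have h2 : Real.exp (2 * c * (t - t)) = 1 := by simp
  rw [h2]
  rw [div_sub_div_same, div_le_div_iff₀ (by positivity) (by positivity)]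
  nlinarith

/-- tail of an integrable function is small -/
lemma stmt15_tail (f : ℝ → ℝ) (hint : IntegrableOn f (Set.Ici 0)) (hf : ∀ t, 0 ≤ f t)
    {ε : ℝ} (hε : 0 < ε) : ∃ S : ℝ, 0 ≤ S ∧ (∫ τ in Set.Ioi S, f τ) < ε := by
  have hioi : IntegrableOn f (Set.Ioi 0) := hint.mono_set Set.Ioi_subset_Ici_self
  have htt := MeasureTheory.intervalIntegral_tendsto_integral_Ioi 0 hioi Filter.tendsto_id
  rw [Metric.tendsto_atTop] at htt
  obtain ⟨S₀, hS₀⟩ := htt ε hε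
  refine ⟨max S₀ 0, le_max_right _ _, ?_⟩
  set S := max S₀ 0 with hS
  have hSnn : 0 ≤ S := le_max_right _ _
  have hsplit : (∫ τ in Set.Ioi 0, f τ) =
      (∫ τ in Set.Ioc 0 S, f τ) + ∫ τ in Set.Ioi S, f τ := by
    rw [← MeasureTheory.setIntegral_union (Set.Ioc_disjoint_Ioi le_rfl) measurableSet_Ioi
      (hioi.mono_set Set.Ioc_subset_Ioi_self) (hioi.mono_set (Set.Ioi_subset_Ioi hSnn)),
      Set.Ioc_union_Ioi_eq_Ioi hSnn]
  have h1 := hS₀ S (le_max_left _ _)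
  rw [Real.dist_eq] at h1
  have h2 : (∫ τ in (0:ℝ)..S, f τ) = ∫ τ in Set.Ioc 0 S, f τ :=
    intervalIntegral.integral_of_le hSnn
  have h3 := abs_lt.mp h1
  simp only [id_eq] at h2 h3 ⊢
  rw [h2] at h3
  linarith [h3.2, hsplit]

/-- existence of a point with small value -/
lemma stmt15_point (f : ℝ → ℝ) (hint : IntegrableOn f (Set.Ici 0)) (hf : ∀ t, 0 ≤ f t)
    (S : ℝ) (hS : 0 ≤ S) {ε : ℝ} (hε : 0 < ε) : ∃ s : ℝ, S ≤ s ∧ f s < ε := by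
  by_contra hcon
  push_neg at hcon
  obtain ⟨n, hn⟩ := exists_nat_gt ((∫ τ in Set.Ici 0, f τ) / ε)
  have hn' : (∫ τ in Set.Ici 0, f τ) < n * ε := by
    rw [div_lt_iff₀ hε] at hn; linarith
  have hsub : Set.Icc S (S + n) ⊆ Set.Ici 0 := fun x hx => le_trans hS hx.1
  have h1 : ε * n ≤ ∫ τ in Set.Icc S (S + n), f τ := by
    have hc : (∫ _ in Set.Icc S (S + n), ε) ≤ ∫ τ in Set.Icc S (S + n), f τ := by
      apply MeasureTheory.setIntegral_mono_on (integrableOn_const (by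
        rw [Real.volume_Icc]; exact ENNReal.ofReal_ne_top)) (hint.mono_set hsub)
        measurableSet_Icc
      intro x hx
      exact hcon x hx.1
    rw [MeasureTheory.setIntegral_const, measureReal_def, Real.volume_Icc] at hc
    have : (S + n - S) = (n : ℝ) := by ring
    rw [this, ENNReal.toReal_ofReal n.cast_nonneg, smul_eq_mul, mul_comm] at hc
    linarith
  have h2 : (∫ τ in Set.Icc S (S + n), f τ) ≤ ∫ τ in Set.Ici 0, f τ := by
    apply MeasureTheory.setIntegral_mono_set hint
      (Filter.Eventually.of_forall fun x => hf x) hsub.eventuallyLE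
  nlinarith

theorem stmt15 {X : Type*} [NormedAddCommGroup X]
    (c₁ c₂ κ₀ : ℝ) (hc₁ : 0 < c₁) (hc₂ : 0 < c₂) (hκ₀ : 0 < κ₀)
    (v : ℝ → X) (E E' : ℝ → ℝ)
    (hfcont : Continuous fun t => ‖v t‖ ^ 2)
    (hfint : IntegrableOn (fun t => ‖v t‖ ^ 2) (Set.Ici 0))
    (hE' : ∀ t : ℝ, 0 ≤ t → HasDerivAt E (E' t) t)
    (hE'cont : ContinuousOn E' (Set.Ici 0))
    (hineq : ∀ t : ℝ, 0 ≤ t → E' t + c₁ * E t ≤ c₂ * Real.sqrt (E t / κ₀))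
    (hlow : ∀ t : ℝ, 0 ≤ t → κ₀ * ‖v t‖ ^ 2 ≤ E t)
    (hup : ∀ t : ℝ, 0 ≤ t → E t ≤ ‖v t‖ ^ 2) :
    Filter.Tendsto E Filter.atTop (nhds 0) ∧
    Filter.Tendsto (fun t => ‖v t‖) Filter.atTop (nhds 0) := by
  have hvnorm : Continuous (fun t => ‖v t‖) := by
    have h := Real.continuous_sqrt.comp hfcont
    convert h using 1
    funext t
    exact (Real.sqrt_sq (norm_nonneg _)).symm
  have hE0 : ∀ t : ℝ, 0 ≤ t → 0 ≤ E t := fun t ht =>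
    le_trans (by positivity) (hlow t ht)
  have hEc : ContinuousOn E (Set.Ici 0) := fun t ht =>
    ((hE' t ht).continuousAt).continuousWithinAt
  have hκ₀s : 0 < Real.sqrt κ₀ := Real.sqrt_pos.mpr hκ₀
  set C := c₂ / Real.sqrt κ₀ with hCdef
  have hC : 0 < C := div_pos hc₂ hκ₀s
  have hkey : ∀ t : ℝ, 0 ≤ t → E' t + c₁ * E t ≤ C * ‖v t‖ := by
    intro t ht
    refine le_trans (hineq t ht) ?_
    have h1 : Real.sqrt (E t / κ₀) ≤ Real.sqrt (‖v t‖ ^ 2 / κ₀) := by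
      apply Real.sqrt_le_sqrt
      gcongr
      exact hup t ht
    have h2 : Real.sqrt (‖v t‖ ^ 2 / κ₀) = ‖v t‖ / Real.sqrt κ₀ := by
      rw [Real.sqrt_div (by positivity), Real.sqrt_sq (norm_nonneg _)]
    calc c₂ * Real.sqrt (E t / κ₀) ≤ c₂ * (‖v t‖ / Real.sqrt κ₀) := by
          rw [← h2]; exact mul_le_mul_of_nonneg_left h1 hc₂.le
      _ = C * ‖v t‖ := by rw [hCdef]; ring
  have main : Filter.Tendsto E Filter.atTop (nhds 0) := by
    rw [Metric.tendsto_atTop]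
    intro ε hε
    set M := ε * c₁ / C with hM
    have hMpos : 0 < M := by positivity
    set ε' := min (ε / 4) (ε * M / (2 * C)) with hε'def
    have hε'pos : 0 < ε' := lt_min (by positivity) (by positivity)
    obtain ⟨S, hSnn, hStail⟩ := stmt15_tail _ hfint (fun t => by positivity) hε'pos
    obtain ⟨s, hSs, hsval⟩ := stmt15_point _ hfint (fun t => by positivity) S hSnn hε'pos
    have hsnn : 0 ≤ s := le_trans hSnn hSs
    refine ⟨s, fun t hts => ?_⟩
    rw [Real.dist_eq, sub_zero, abs_of_nonneg (hE0 t (le_trans hsnn hts))]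
    have hsub : Set.Icc s t ⊆ Set.Ici 0 := fun x hx => le_trans hsnn hx.1
    have hgr := stmt15_gron c₁ E E' (fun τ => C * ‖v τ‖) s t hts
      (fun τ hτ => hE' τ (hsub hτ)) (hE'cont.mono hsub) (hEc.mono hsub)
      ((continuous_const.mul hvnorm).continuousOn)
      (fun τ hτ => hkey τ (hsub hτ))
    have hptwise : ∀ τ ∈ Set.Icc s t, Real.exp (c₁ * (τ - t)) * (C * ‖v τ‖) ≤
        C * M / 2 * Real.exp (2 * c₁ * (τ - t)) + C / (2 * M) * ‖v τ‖ ^ 2 := by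
      intro τ _
      have ha : Real.exp (2 * c₁ * (τ - t)) = Real.exp (c₁ * (τ - t)) ^ 2 := by
        rw [sq, ← Real.exp_add]; congr 1; ring
      rw [ha]
      set a := Real.exp (c₁ * (τ - t)) with hadef
      set b := ‖v τ‖ with hbdef
      have hkey2 : C * M / 2 * a ^ 2 + C / (2 * M) * b ^ 2 - a * (C * b) =
          C / (2 * M) * (M * a - b) ^ 2 := by
        field_simp
        ring
      have h2 : 0 ≤ C / (2 * M) * (M * a - b) ^ 2 := by positivity
      linarith
    have hv2bound : (∫ τ in s..t, ‖v τ‖ ^ 2) ≤ ε' := by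
      rw [intervalIntegral.integral_of_le hts]
      have hsub2 : Set.Ioc s t ⊆ Set.Ioi S := fun x hx => lt_of_le_of_lt hSs hx.1
      have hsub3 : Set.Ioi S ⊆ Set.Ici 0 := fun x hx => le_of_lt (lt_of_le_of_lt hSnn hx)
      calc (∫ τ in Set.Ioc s t, ‖v τ‖ ^ 2) ≤ ∫ τ in Set.Ioi S, ‖v τ‖ ^ 2 :=
            MeasureTheory.setIntegral_mono_set (hfint.mono_set hsub3)
              (Filter.Eventually.of_forall fun x => by positivity) hsub2.eventuallyLE
        _ ≤ ε' := hStail.le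
    have hce : Continuous fun τ : ℝ => Real.exp (c₁ * (τ - t)) :=
      Real.continuous_exp.comp (continuous_const.mul (continuous_id.sub continuous_const) : Continuous fun τ : ℝ => c₁ * (τ - t))
    have hce2 : Continuous fun τ : ℝ => Real.exp (2 * c₁ * (τ - t)) :=
      Real.continuous_exp.comp (continuous_const.mul (continuous_id.sub continuous_const) : Continuous fun τ : ℝ => 2 * c₁ * (τ - t))
    have hi1 : IntervalIntegrable (fun τ => Real.exp (c₁ * (τ - t)) * (C * ‖v τ‖)) volume s t :=
      (hce.mul (continuous_const.mul hvnorm)).intervalIntegrable s t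
    have hie : IntervalIntegrable (fun τ => C * M / 2 * Real.exp (2 * c₁ * (τ - t))) volume s t :=
      (continuous_const.mul hce2).intervalIntegrable s t
    have hiv : IntervalIntegrable (fun τ => C / (2 * M) * ‖v τ‖ ^ 2) volume s t :=
      (continuous_const.mul hfcont).intervalIntegrable s t
    have hintbound : (∫ τ in s..t, Real.exp (c₁ * (τ - t)) * (C * ‖v τ‖)) ≤
        C * M / 2 * (1 / (2 * c₁)) + C / (2 * M) * ε' := by
      calc (∫ τ in s..t, Real.exp (c₁ * (τ - t)) * (C * ‖v τ‖))
          ≤ ∫ τ in s..t, (C * M / 2 * Real.exp (2 * c₁ * (τ - t)) + C / (2 * M) * ‖v τ‖ ^ 2) :=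
            intervalIntegral.integral_mono_on hts hi1 (hie.add hiv) hptwise
        _ = C * M / 2 * (∫ τ in s..t, Real.exp (2 * c₁ * (τ - t))) +
            C / (2 * M) * ∫ τ in s..t, ‖v τ‖ ^ 2 := by
            rw [intervalIntegral.integral_add hie hiv, intervalIntegral.integral_const_mul,
              intervalIntegral.integral_const_mul]
        _ ≤ C * M / 2 * (1 / (2 * c₁)) + C / (2 * M) * ε' :=
            add_le_add (mul_le_mul_of_nonneg_left (stmt15_expint c₁ hc₁ s t hts) (by positivity))
              (mul_le_mul_of_nonneg_left hv2bound (by positivity))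
    have hexp1 : Real.exp (c₁ * (s - t)) ≤ 1 := by
      rw [Real.exp_le_one_iff]
      nlinarith
    have hEs : E s ≤ ε' := le_trans (hup s hsnn) hsval.le
    have hterm1 : Real.exp (c₁ * (s - t)) * E s ≤ ε' :=
      le_trans (mul_le_mul_of_nonneg_right hexp1 (hE0 s hsnn) |>.trans_eq (one_mul _)) hEs
    have e1 : C * M / 2 * (1 / (2 * c₁)) = ε / 4 := by
      rw [hM]
      field_simp
      ring
    have e2 : C / (2 * M) * ε' ≤ ε / 4 := by
      calc C / (2 * M) * ε' ≤ C / (2 * M) * (ε * M / (2 * C)) :=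
            mul_le_mul_of_nonneg_left (min_le_right _ _) (by positivity)
        _ = ε / 4 := by field_simp; ring
    have e3 : ε' ≤ ε / 4 := min_le_left _ _
    linarith
  refine ⟨main, ?_⟩
  have hEdiv : Filter.Tendsto (fun t => E t / κ₀) Filter.atTop (nhds 0) := by
    have := main.div_const κ₀
    simpa using this
  have hsq : Filter.Tendsto (fun t => ‖v t‖ ^ 2) Filter.atTop (nhds 0) := by
    apply tendsto_of_tendsto_of_tendsto_of_le_of_le' tendsto_const_nhds hEdiv
    · exact Filter.Eventually.of_forall fun t => by positivity
    · filter_upwards [Filter.eventually_ge_atTop (0:ℝ)] with t ht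
      rw [le_div_iff₀ hκ₀]
      linarith [hlow t ht]
  have hcomp := (Real.continuous_sqrt.tendsto 0).comp hsq
  rw [Real.sqrt_zero] at hcomp
  have heq : (fun t => Real.sqrt (‖v t‖ ^ 2)) = fun t => ‖v t‖ :=
    funext fun t => Real.sqrt_sq (norm_nonneg _)
  rw [← heq]
  exact hcomp
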